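/- Let n be an even positive integer, let k be an integer with 1 ≤ k ≤ n−1, and let d be a positive divisor of n such that gcd(k, n/d) > 1. Then there is no canonical parity-alternate permutation A of [n] with exactly k ascents whose minimal period under τ is d; that is, no such A (of either parity) satisfies τ^d A = A with d minimal among positive exponents. -/

import Mathlib

open Finset

/-- Number of ascents of a permutation of `[n]` (positions `i` with `a_i < a_{i+1}`). -/
def ascents {n : ℕ} (A : Equiv.Perm (Fin n)) : ℕ :=
  (univ.filter fun i : Fin n => ∃ h : i.val + 1 < n, A i < A ⟨i.val + 1, h⟩).card

/-- Number of inversions of a permutation. -/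
def invNum {n : ℕ} (A : Equiv.Perm (Fin n)) : ℕ :=
  (univ.filter fun p : Fin n × Fin n => p.1 < p.2 ∧ A p.2 < A p.1).card

/-- A permutation is parity-alternate if consecutive entries have different parity. -/
def IsPAP {n : ℕ} (A : Equiv.Perm (Fin n)) : Prop :=
  ∀ i : Fin n, ∀ h : i.val + 1 < n, (A i).val % 2 ≠ (A ⟨i.val + 1, h⟩).val % 2

instance {n : ℕ} (A : Equiv.Perm (Fin n)) : Decidable (IsPAP A) := by
  unfold IsPAP; infer_instance

/-- `P_{n,k}`: number of even parity-alternate permutations of `[n]` with `k` ascents. -/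
def papEven (n k : ℕ) : ℕ :=
  (univ.filter fun A : Equiv.Perm (Fin n) => IsPAP A ∧ ascents A = k ∧ Even (invNum A)).card

/-- `Q_{n,k}`: number of odd parity-alternate permutations of `[n]` with `k` ascents. -/
def papOdd (n k : ℕ) : ℕ :=
  (univ.filter fun A : Equiv.Perm (Fin n) => IsPAP A ∧ ascents A = k ∧ Odd (invNum A)).card

/-- `S_{n,k}`: number of parity-alternate permutations of `[n]` with `k` ascents. -/
def papTotal (n k : ℕ) : ℕ :=
  (univ.filter fun A : Equiv.Perm (Fin n) => IsPAP A ∧ ascents A = k).card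

/-- `R_{n,k} = P_{n,k} - Q_{n,k}`. -/
def papSigned (n k : ℕ) : ℤ := (papEven n k : ℤ) - papOdd n k

/-- `B_{n,k}`: number of even permutations of `[n]` with `k` ascents. -/
def eulerEven (n k : ℕ) : ℕ :=
  (univ.filter fun A : Equiv.Perm (Fin n) => ascents A = k ∧ Even (invNum A)).card

/-- `C_{n,k}`: number of odd permutations of `[n]` with `k` ascents. -/
def eulerOdd (n k : ℕ) : ℕ :=
  (univ.filter fun A : Equiv.Perm (Fin n) => ascents A = k ∧ Odd (invNum A)).card

/-- `D_{n,k} = B_{n,k} - C_{n,k}`: the signed Eulerian number. -/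
def eulerSigned (n k : ℕ) : ℤ := (eulerEven n k : ℤ) - eulerOdd n k

/-- The operator σ on permutations of `[n]`: add one to every entry, replacing `n+1` by `1`,
except that if `n` is the last (resp. first) entry it is removed and `1` is put at the
first (resp. last) position. -/
def sigmaOp {n : ℕ} (A : Equiv.Perm (Fin n)) : Equiv.Perm (Fin n) :=
  if h : n = 0 then A
  else
    let lastE : Fin n := ⟨n - 1, by omega⟩
    if A lastE = lastE then
      -- `n` is the last entry: σ(a₁⋯aₙ₋₁ n) = 1 (a₁+1) ⋯ (aₙ₋₁+1)
      ((finRotate n).symm.trans A).trans (finRotate n)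
    else if A ⟨0, by omega⟩ = lastE then
      -- `n` is the first entry: σ(n a₁⋯aₙ₋₁) = (a₁+1) ⋯ (aₙ₋₁+1) 1
      ((finRotate n).trans A).trans (finRotate n)
    else
      A.trans (finRotate n)

/-- The operator τ on canonical permutations (those with last entry `n`):
`τ A = σ^[n - a_{n-1}] A`, where `a_{n-1}` is the second-to-last (1-based) entry. -/
def tauOp {n : ℕ} (A : Equiv.Perm (Fin n)) : Equiv.Perm (Fin n) :=
  if h : n = 0 then A
  else sigmaOp^[n - 1 - (A ⟨n - 2, by omega⟩).val] A

open Fin.NatCast Fin.CommRing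

section Aux
variable {m : ℕ}

lemma rot_symm (x : Fin (m+1)) : (finRotate (m+1)).symm x = x - 1 := by
  rw [Equiv.symm_apply_eq, finRotate_succ_apply, sub_add_cancel]

lemma sigma_canon (A : Equiv.Perm (Fin (m+1)))
    (hA : A (Fin.last m) = Fin.last m) (x : Fin (m+1)) :
    sigmaOp A x = A (x - 1) + 1 := by
  have hL : (⟨m + 1 - 1, by omega⟩ : Fin (m+1)) = Fin.last m := rfl
  simp only [sigmaOp, dif_neg (Nat.succ_ne_zero m), hL]
  rw [if_pos hA]
  simp [Equiv.trans_apply, rot_symm, finRotate_succ_apply]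

lemma sigma_gen (A : Equiv.Perm (Fin (m+1))) (h1 : A (Fin.last m) ≠ Fin.last m)
    (h2 : A ⟨0, Nat.succ_pos m⟩ ≠ Fin.last m) (x : Fin (m+1)) :
    sigmaOp A x = A x + 1 := by
  have hL : (⟨m + 1 - 1, by omega⟩ : Fin (m+1)) = Fin.last m := rfl
  have h0 : (⟨0, by omega⟩ : Fin (m+1)) = ⟨0, Nat.succ_pos m⟩ := rfl
  simp only [sigmaOp, dif_neg (Nat.succ_ne_zero m), hL, h0]
  rw [if_neg h1, if_neg h2]
  simp [Equiv.trans_apply, finRotate_succ_apply]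
end Aux

section Aux2
variable {m : ℕ}

lemma tau_step (hm : 0 < m) (A : Equiv.Perm (Fin (m+1)))
    (hA : A (Fin.last m) = Fin.last m) :
    ∃ c : Fin (m+1), (∀ x, tauOp A x = A (x - 1) + c) ∧
      tauOp A (Fin.last m) = Fin.last m := by
  set p2 : Fin (m+1) := ⟨m - 1, by omega⟩ with hp2
  have hp2L : p2 ≠ Fin.last m := by
    simp only [hp2, Fin.ext_iff, Fin.val_last, ne_eq]; omega
  have hAp2 : A p2 ≠ Fin.last m := fun h => hp2L (A.injective (h.trans hA.symm))
  have hvm : (A p2).val < m := by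
    have h1 := (A p2).isLt
    rcases Nat.lt_succ_iff_lt_or_eq.mp h1 with h | h
    · exact h
    · exact absurd (Fin.ext (h.trans (Fin.val_last m).symm)) hAp2
  set v := (A p2).val with hv
  set e := m - v with he
  have he1 : 1 ≤ e := by omega
  have hem : e ≤ m := by omega
  have hL1 : (Fin.last m) - 1 = p2 := by
    have h : p2 + 1 = Fin.last m := by
      rw [Fin.ext_iff, Fin.val_add, Fin.val_one', Fin.val_last]
      simp only [hp2]
      rw [Nat.mod_eq_of_lt (show 1 < m + 1 by omega), show (m - 1 + 1) % (m+1) = m - 1 + 1 from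
        Nat.mod_eq_of_lt (by omega)]
      omega
    rw [← h, add_sub_cancel_right]
  have h01 : (⟨0, Nat.succ_pos m⟩ : Fin (m+1)) - 1 = Fin.last m := by
    have h : Fin.last m + 1 = ⟨0, Nat.succ_pos m⟩ := by
      rw [Fin.ext_iff, Fin.val_add, Fin.val_one', Fin.val_last]
      rw [Nat.mod_eq_of_lt (show 1 < m + 1 by omega), show (m + 1) % (m + 1) = 0 from Nat.mod_self _]
    rw [← h, add_sub_cancel_right]
  have key : ∀ j, 1 ≤ j → j ≤ e → ∀ x, (sigmaOp^[j] A) x = A (x - 1) + (j : Fin (m+1)) := by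
    intro j
    induction j with
    | zero => omega
    | succ j ih =>
      intro _ h2 x
      rcases Nat.eq_zero_or_pos j with hj0 | hj0
      · subst hj0
        simpa using sigma_canon A hA x
      · have hje : j ≤ e := by omega
        have ihx := ih hj0 hje
        rw [Function.iterate_succ_apply']
        have hjlt : j < m + 1 := by omega
        have hjval : ((j : Fin (m+1))).val = j := Fin.val_cast_of_lt hjlt
        have hCL : (sigmaOp^[j] A) (Fin.last m) ≠ Fin.last m := by
          rw [ihx, hL1]
          intro hcon
          have hval := congrArg Fin.val hcon
          rw [Fin.val_add, hjval, Fin.val_last, ← hv,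
            Nat.mod_eq_of_lt (by omega)] at hval
          omega
        have hC0 : (sigmaOp^[j] A) ⟨0, Nat.succ_pos m⟩ ≠ Fin.last m := by
          rw [ihx, h01, hA]
          intro hcon
          have hval := congrArg Fin.val hcon
          rw [Fin.val_add, hjval, Fin.val_last,
            show m + j = (m + 1) + (j - 1) by omega, Nat.add_mod_left,
            Nat.mod_eq_of_lt (show j - 1 < m + 1 by omega)] at hval
          omega
        rw [sigma_gen (sigmaOp^[j] A) hCL hC0 x, ihx x, add_assoc]
        congr 1
        push_cast
        ring
  have hUnf : tauOp A = sigmaOp^[m + 1 - 1 - (A ⟨m + 1 - 2, by omega⟩).val] A := by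
    rw [tauOp, dif_neg (Nat.succ_ne_zero m)]
  have hp2' : (⟨m + 1 - 2, by omega⟩ : Fin (m+1)) = p2 := rfl
  rw [hp2'] at hUnf
  have hexp : m + 1 - 1 - (A p2).val = e := by omega
  rw [hexp] at hUnf
  refine ⟨(e : Fin (m+1)), fun x => by rw [hUnf]; exact key e he1 le_rfl x, ?_⟩
  rw [hUnf, key e he1 le_rfl, hL1]
  have heval : ((e : Fin (m+1))).val = e := Fin.val_cast_of_lt (by omega)
  rw [Fin.ext_iff, Fin.val_add, heval, Fin.val_last, ← hv,
    Nat.mod_eq_of_lt (by omega)]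
  omega

lemma tau_iter (hm : 0 < m) (A : Equiv.Perm (Fin (m+1)))
    (hA : A (Fin.last m) = Fin.last m) (l : ℕ) :
    ∃ c : Fin (m+1), (∀ x, (tauOp^[l] A) x = A (x - (l : Fin (m+1))) + c) ∧
      (tauOp^[l] A) (Fin.last m) = Fin.last m := by
  induction l with
  | zero => exact ⟨0, fun x => by simp, by simpa using hA⟩
  | succ l ih =>
    obtain ⟨c, hc, hcan⟩ := ih
    obtain ⟨c', hc', hcan'⟩ := tau_step hm (tauOp^[l] A) hcan
    refine ⟨c + c', fun x => ?_, by rw [Function.iterate_succ_apply']; exact hcan'⟩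
    rw [Function.iterate_succ_apply', hc' x, hc (x - 1)]
    have : x - 1 - (l : Fin (m+1)) = x - ((l + 1 : ℕ) : Fin (m+1)) := by
      push_cast
      ring
    rw [this, add_assoc]

end Aux2

section Aux3
variable {m : ℕ}

def ascents' {n : ℕ} (A : Equiv.Perm (Fin n)) : ℕ :=
  (Finset.univ.filter fun i : Fin n => ∃ h : i.val + 1 < n, A i < A ⟨i.val + 1, h⟩).card

lemma finAddOne_ne (hm : 0 < m) (x : Fin (m+1)) : x + 1 ≠ x := by
  intro h
  have h2 := congrArg Fin.val h
  rw [Fin.val_add, Fin.val_one', Nat.mod_eq_of_lt (show 1 < m+1 by omega)] at h2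
  have hlt := x.isLt
  rcases Nat.lt_or_ge (x.val + 1) (m+1) with hl | hg
  · rw [Nat.mod_eq_of_lt hl] at h2; omega
  · have hx : x.val = m := by omega
    rw [hx, Nat.mod_self] at h2; omega

lemma asc_filter_eq (hm : 0 < m) (A : Equiv.Perm (Fin (m+1)))
    (hA : A (Fin.last m) = Fin.last m) :
    (Finset.univ.filter fun i : Fin (m+1) =>
        ∃ h : i.val + 1 < m + 1, A i < A ⟨i.val + 1, h⟩) =
      (Finset.univ.filter fun x : Fin (m+1) => A x < A (x+1)) := by
  apply Finset.filter_congr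
  intro i _
  by_cases hi : i.val + 1 < m + 1
  · have hadd : i + 1 = ⟨i.val + 1, hi⟩ := by
      rw [Fin.ext_iff, Fin.val_add, Fin.val_one',
        Nat.mod_eq_of_lt (show 1 < m + 1 by omega), Nat.mod_eq_of_lt hi]
    simp only [hadd]
    constructor
    · rintro ⟨h, hlt⟩; exact hlt
    · intro hlt; exact ⟨hi, hlt⟩
  · have hil : i = Fin.last m := by
      rw [Fin.ext_iff, Fin.val_last]; have := i.isLt; omega
    subst hil
    simp only [hi, hA]
    constructor
    · rintro ⟨h, _⟩; omega
    · intro hlt; exact absurd hlt (not_lt.2 (Fin.le_last _))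

lemma asc_sum (hm : 0 < m) (A : Equiv.Perm (Fin (m+1)))
    (hA : A (Fin.last m) = Fin.last m) :
    ∃ D : ℕ, ascents' A + D = m + 1 ∧
      ∑ x : Fin (m+1), (A (x+1) - A x).val = (m+1) * D := by
  classical
  set D := (Finset.univ.filter fun x : Fin (m+1) => A (x+1) < A x).card with hD
  have hne : ∀ x : Fin (m+1), A (x+1) ≠ A x := fun x h =>
    finAddOne_ne hm x (A.injective h)
  have hcards : ascents' A + D = m + 1 := by
    rw [ascents', asc_filter_eq hm A hA, hD]
    have := Finset.card_filter_add_card_filter_not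
      (s := (Finset.univ : Finset (Fin (m+1)))) (p := fun x => A x < A (x+1))
    rw [Finset.card_univ, Fintype.card_fin] at this
    have hfilt : Finset.filter (fun a => ¬ A a < A (a+1)) Finset.univ
        = Finset.filter (fun x : Fin (m+1) => A (x+1) < A x) Finset.univ := by
      apply Finset.filter_congr
      intro x _
      simp only [not_lt]
      exact ⟨fun h => lt_of_le_of_ne h (hne x), le_of_lt⟩
    rw [hfilt] at this
    exact this
  refine ⟨D, hcards, ?_⟩
  have keyZ : ∀ x : Fin (m+1), ((A (x+1)).val : ℤ) - (A x).val =
      ((A (x+1) - A x).val : ℤ) - (m+1) * (if A (x+1) < A x then 1 else 0) := by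
    intro x
    have hvne : (A (x+1)).val ≠ (A x).val := fun h => hne x (Fin.ext h)
    have hsub : ((A (x+1) - A x)).val
        = ((m+1) - (A x).val + (A (x+1)).val) % (m+1) := by
      rw [Fin.sub_def]
    have hb := (A x).isLt
    have ha := (A (x+1)).isLt
    by_cases hlt : A (x+1) < A x
    · have hlt' : (A (x+1)).val < (A x).val := hlt
      rw [if_pos hlt, hsub, Nat.mod_eq_of_lt (by omega)]
      push_cast
      omega
    · have hlt' : (A x).val < (A (x+1)).val := by
        rcases lt_or_gt_of_ne hvne with h | h
        · exact absurd h hlt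
        · exact h
      rw [if_neg hlt, hsub, show (m+1) - (A x).val + (A (x+1)).val
          = (m+1) + ((A (x+1)).val - (A x).val) by omega, Nat.add_mod_left,
        Nat.mod_eq_of_lt (by omega)]
      push_cast
      omega
  have hshiftsum : ∑ x : Fin (m+1), ((A (x+1)).val : ℤ)
      = ∑ x : Fin (m+1), ((A x).val : ℤ) := by
    simpa using Equiv.sum_comp (Equiv.addRight (1 : Fin (m+1)))
      (fun y => ((A y).val : ℤ))
  have hzero : (0 : ℤ) = ∑ x : Fin (m+1), (((A (x+1)).val : ℤ) - (A x).val) := by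
    rw [Finset.sum_sub_distrib, hshiftsum, sub_self]
  rw [Finset.sum_congr rfl (fun x _ => keyZ x)] at hzero
  rw [Finset.sum_sub_distrib, ← Finset.mul_sum, Finset.sum_boole] at hzero
  have hzero' : (∑ x : Fin (m+1), ((A (x+1) - A x).val : ℤ)) = (m+1) * D := by
    rw [hD]; omega
  have := hzero'
  push_cast at this ⊢
  exact_mod_cast this

lemma sum_range_add' {M : Type*} [AddCommMonoid M] (f : ℕ → M) (a b : ℕ) :
    ∑ t ∈ Finset.range (a+b), f t
      = (∑ t ∈ Finset.range a, f t) + ∑ t ∈ Finset.range b, f (a + t) := by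
  induction b with
  | zero => simp
  | succ b ih =>
    rw [Nat.add_succ, Finset.sum_range_succ, Finset.sum_range_succ, ih, add_assoc]

end Aux3

theorem no_canonical_pap_of_period (n k d : ℕ) (hn : Even n) (hn0 : 0 < n)
    (hk1 : 1 ≤ k) (hk2 : k ≤ n - 1) (hd0 : 0 < d) (hdn : d ∣ n)
    (hgcd : 1 < Nat.gcd k (n / d)) :
    ¬ ∃ A : Equiv.Perm (Fin n), IsPAP A ∧ ascents A = k ∧
      A ⟨n - 1, by omega⟩ = ⟨n - 1, by omega⟩ ∧
      tauOp^[d] A = A ∧ ∀ ℓ : ℕ, 0 < ℓ → tauOp^[ℓ] A = A → d ≤ ℓ := by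
  rintro ⟨A, -, hk, hcanon, hper, -⟩
  obtain ⟨m, rfl⟩ : ∃ m, n = m + 1 := ⟨n - 1, by omega⟩
  have hm : 0 < m := by
    rcases hn with ⟨t, ht⟩; omega
  have hA : A (Fin.last m) = Fin.last m := hcanon
  -- the shift structure from τ^d A = A
  obtain ⟨C, hC, -⟩ := tau_iter hm A hA d
  rw [hper] at hC
  have hshift : ∀ x, A (x + (d : Fin (m+1))) = A x + C := by
    intro x
    have h := hC (x + (d : Fin (m+1)))
    rwa [add_sub_cancel_right] at h
  -- counting: ∑ δ = (m+1) * D with k + D = m + 1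
  obtain ⟨D, hkD, hsum⟩ := asc_sum hm A hA
  have hkk : ascents' A = k := hk
  rw [hkk] at hkD
  -- δ and its periodicity
  set δ : Fin (m+1) → ℕ := fun x => (A (x+1) - A x).val with hδ
  have hδper : ∀ x, δ (x + (d : Fin (m+1))) = δ x := by
    intro x
    simp only [hδ]
    rw [show x + (d : Fin (m+1)) + 1 = (x + 1) + (d : Fin (m+1)) by ring,
      hshift, hshift, add_sub_add_right_eq_sub]
  set δ' : ℕ → ℕ := fun t => δ ((t : Fin (m+1))) with hδ'
  have hδ'per : ∀ t, δ' (t + d) = δ' t := by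
    intro t
    simp only [hδ']
    rw [show ((t + d : ℕ) : Fin (m+1)) = ((t : ℕ) : Fin (m+1)) + (d : Fin (m+1))
      by push_cast; ring]
    exact hδper _
  -- sum over Fin = sum over range
  have hfin : ∑ x : Fin (m+1), δ x = ∑ t ∈ Finset.range (m+1), δ' t := by
    rw [← Fin.sum_univ_eq_sum_range]
    apply Finset.sum_congr rfl
    intro x _
    simp only [hδ', Fin.cast_val_eq_self]
  set q := (m+1)/d with hq
  have hqd : q * d = m + 1 := Nat.div_mul_cancel hdn
  have hq0 : 0 < q := Nat.pos_of_ne_zero fun h => by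
    rw [h, zero_mul] at hqd; omega
  -- block decomposition
  have hδ'shift : ∀ s t : ℕ, δ' (s*d + t) = δ' t := by
    intro s
    induction s with
    | zero => intro t; simp
    | succ s ih =>
      intro t
      rw [show (s+1)*d + t = (s*d + t) + d by ring, hδ'per, ih]
  have hblocks : ∀ s : ℕ, ∑ t ∈ Finset.range (s*d), δ' t
      = s * ∑ t ∈ Finset.range d, δ' t := by
    intro s
    induction s with
    | zero => simp
    | succ s ih =>
      rw [show (s+1)*d = s*d + d by ring, sum_range_add', ih]
      rw [Finset.sum_congr rfl (fun t _ => hδ'shift s t)]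
      ring
  set B := ∑ t ∈ Finset.range d, δ' t with hB
  have hqB : q * B = (m+1) * D := by
    rw [hB, ← hblocks q, hqd, ← hfin, hsum]
  have hBval : B = d * D := by
    have h1 : q * B = q * (d * D) := by rw [hqB, ← hqd]; ring
    exact Nat.eq_of_mul_eq_mul_left hq0 h1
  -- telescoping: (B : Fin (m+1)) = C
  have htel : ∀ j : ℕ, ((∑ t ∈ Finset.range j, δ' t : ℕ) : Fin (m+1))
      = A ((j : ℕ) : Fin (m+1)) - A 0 := by
    intro j
    induction j with
    | zero => simp
    | succ j ih =>
      rw [Finset.sum_range_succ, Nat.cast_add, ih]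
      have hcast : ((δ' j : ℕ) : Fin (m+1))
          = A (((j : ℕ) : Fin (m+1)) + 1) - A ((j : ℕ) : Fin (m+1)) := by
        simp only [hδ', hδ, Fin.cast_val_eq_self]
      rw [hcast, show ((j + 1 : ℕ) : Fin (m+1)) = ((j : ℕ) : Fin (m+1)) + 1
        by push_cast; ring]
      ring
  have hCB : C = ((B : ℕ) : Fin (m+1)) := by
    have h0 := hshift 0
    rw [zero_add] at h0
    rw [htel d, h0]
    ring
  -- iterate the shift
  have hmulti : ∀ j : ℕ, ∀ x, A (x + ((j*d : ℕ) : Fin (m+1)))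
      = A x + ((j : ℕ) : Fin (m+1)) * C := by
    intro j
    induction j with
    | zero => simp
    | succ j ih =>
      intro x
      rw [show ((j+1)*d : ℕ) = j*d + d by ring, Nat.cast_add,
        show x + (((j*d : ℕ) : Fin (m+1)) + ((d : ℕ) : Fin (m+1)))
          = (x + (d : Fin (m+1))) + ((j*d : ℕ) : Fin (m+1)) by ring,
        ih, hshift]
      push_cast
      ring
  -- the contradiction
  set g := Nat.gcd k q with hg
  have hgk : g ∣ k := Nat.gcd_dvd_left _ _
  have hgq : g ∣ q := Nat.gcd_dvd_right _ _
  have hg1 : 1 < g := hgcd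
  have hgn : g ∣ m + 1 := hgq.trans ⟨d, hqd.symm⟩
  have hgD : g ∣ D := by
    have h1 : g ∣ (m + 1) - k := Nat.dvd_sub hgn hgk
    have h2 : D = (m + 1) - k := by omega
    rwa [← h2] at h1
  obtain ⟨s, hs⟩ := hgD
  set j0 := q / g with hj0
  have hj0g : j0 * g = q := Nat.div_mul_cancel hgq
  have hj01 : 1 ≤ j0 := Nat.pos_of_ne_zero fun h => by
    rw [h, zero_mul] at hj0g; omega
  have h2 : ((j0 : ℕ) : Fin (m+1)) * C = 0 := by
    rw [hCB, hBval, ← Nat.cast_mul, Fin.natCast_eq_zero]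
    exact ⟨s, by rw [hs, ← hqd, ← hj0g]; ring⟩
  have h1 := hmulti j0 0
  rw [zero_add, h2, add_zero] at h1
  have h3 := A.injective h1
  rw [Fin.natCast_eq_zero] at h3
  have hle : m + 1 ≤ j0 * d := Nat.le_of_dvd (Nat.mul_pos (by omega) hd0) h3
  have key2 : g * (j0 * d) = m + 1 := by
    rw [show g * (j0 * d) = (j0 * g) * d by ring, hj0g, hqd]
  have key4 : g * (m + 1) ≤ g * (j0 * d) := Nat.mul_le_mul_left g hle
  have key5 : 2 * (m + 1) ≤ g * (m + 1) := Nat.mul_le_mul_right (m+1) hg1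
  omega
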